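/- For all n ≥ 1, the formula ∏_{k=0}^{n-1} (3k+1)!/(n+k)! defines an integer, and for n = 1,...,6 it takes the values 1, 2, 7, 42, 429, 7436. -/

import Mathlib

open Finset

/-! ### Auxiliary lemmas -/

/-- Sum of an indicator `a ≤ k` over `range n`. -/
lemma aux_ind_sum (a n : ℕ) :
    (∑ k ∈ range n, (if a ≤ k then 1 else 0)) = n - a := by
  induction n with
  | zero => simp
  | succ n ih => rw [Finset.sum_range_succ, ih]; split <;> omega

/-- A shifted-window sum of a periodic function equals the sum over one period. -/
lemma aux_window (f : ℕ → ℕ) (m : ℕ) (hf : ∀ k, f (k + m) = f k) (t : ℕ) :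
    (∑ k ∈ Finset.Ico t (t + m), f k) = ∑ k ∈ range m, f k := by
  induction t with
  | zero => simp
  | succ t ih =>
    have h1 : (∑ k ∈ Finset.Ico t (t + m + 1), f k)
        = (∑ k ∈ Finset.Ico t (t + m), f k) + f (t + m) :=
      Finset.sum_Ico_succ_top (by omega) f
    have h2 : (∑ k ∈ Finset.Ico t (t + m + 1), f k)
        = f t + ∑ k ∈ Finset.Ico (t + 1) (t + m + 1), f k := by
      rcases Nat.eq_zero_or_pos m with hm | hm
      · subst hm; simp [Finset.sum_Ico_eq_sum_range]
      · exact Finset.sum_eq_sum_Ico_succ_bot (by omega) f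
    have h3 : f (t + m) = f t := hf t
    have : (∑ k ∈ Finset.Ico (t + 1) (t + 1 + m), f k)
        = ∑ k ∈ Finset.Ico t (t + m), f k := by
      have : t + 1 + m = t + m + 1 := by omega
      rw [this]; omega
    rw [this, ih]

lemma aux_sum_3k1 (n : ℕ) : (∑ k ∈ range n, (3 * k + 1)) = ∑ k ∈ range n, (n + k) := by
  have h := Finset.sum_range_id_mul_two n
  have h1 : (∑ k ∈ range n, (3 * k + 1)) = 3 * (∑ k ∈ range n, k) + n := by
    simp [Finset.sum_add_distrib, Finset.mul_sum]
  have h2 : (∑ k ∈ range n, (n + k)) = n * n + (∑ k ∈ range n, k) := by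
    rw [Finset.sum_add_distrib, Finset.sum_const, Finset.card_range, smul_eq_mul]
  have h4 : n * (n - 1) + n = n * n := by
    cases n with
    | zero => rfl
    | succ n' => simp [Nat.succ_sub_one]; ring
  omega

/-- `x / m` for `x < 3m` as a sum of two indicators. -/
lemma aux_div3 {m x : ℕ} (hm : 0 < m) (hx : x < 3 * m) :
    x / m = (if m ≤ x then 1 else 0) + (if 2 * m ≤ x then 1 else 0) := by
  rcases Nat.lt_or_ge x m with h | h
  · rw [if_neg (by omega), if_neg (by omega), Nat.div_eq_of_lt h]
  · rcases Nat.lt_or_ge x (2 * m) with h2 | h2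
    · have hq : x / m = 1 := Nat.div_eq_of_lt_le (by omega) (by omega)
      rw [if_pos h, if_neg (by omega), hq]
    · have hq : x / m = 2 := Nat.div_eq_of_lt_le (by omega) (by omega)
      rw [if_pos h, if_pos h2, hq]

/-- Sum of the quotients `(3k+1)/m` over a full period is `m`. -/
lemma aux_qsum_period {m : ℕ} (hm : 0 < m) :
    (∑ k ∈ range m, (3 * k + 1) / m) = m := by
  have key : ∀ k < m, (3 * k + 1) / m + (3 * (m - 1 - k) + 1) / m = 2 := by
    intro k hk
    have hx : 3 * k + 1 < 3 * m := by omega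
    have hy : 3 * (m - 1 - k) + 1 < 3 * m := by omega
    rw [aux_div3 hm hx, aux_div3 hm hy]
    split_ifs <;> omega
  have hrefl := Finset.sum_range_reflect (fun k => (3 * k + 1) / m) m
  have : (∑ k ∈ range m, (3 * k + 1) / m) + (∑ k ∈ range m, (3 * k + 1) / m)
      = ∑ k ∈ range m, 2 := by
    nth_rewrite 1 [← hrefl]
    rw [← Finset.sum_add_distrib]
    apply Finset.sum_congr rfl
    intro k hk
    rw [Finset.mem_range] at hk
    have := key k hk
    omega
  simp at this
  omega

/-- Sum of `(3k+1) % m` over a full period equals sum of `k % m` (namely `∑ k < m, k`). -/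
lemma aux_msum_period {m : ℕ} (hm : 0 < m) :
    (∑ k ∈ range m, (3 * k + 1) % m) = ∑ k ∈ range m, k := by
  have h1 : (∑ k ∈ range m, (3 * k + 1) % m) + m * (∑ k ∈ range m, (3 * k + 1) / m)
      = ∑ k ∈ range m, (3 * k + 1) := by
    rw [Finset.mul_sum, ← Finset.sum_add_distrib]
    apply Finset.sum_congr rfl
    intro k _
    exact Nat.mod_add_div (3 * k + 1) m
  rw [aux_qsum_period hm] at h1
  have h2 : (∑ k ∈ range m, (3 * k + 1)) = 3 * (∑ k ∈ range m, k) + m := by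
    simp [Finset.sum_add_distrib, Finset.mul_sum]
  have h3 := Finset.sum_range_id_mul_two m
  have h4 : m * (m - 1) + m = m * m := by
    cases m with
    | zero => rfl
    | succ m' => simp [Nat.succ_sub_one]; ring
  omega

/-- Key inequality, mod form: `∑_{k<n} (3k+1) % m ≤ ∑_{k<n} (n+k) % m`. -/
lemma key_mod (m : ℕ) : ∀ n : ℕ,
    (∑ k ∈ range n, (3 * k + 1) % m) ≤ ∑ k ∈ range n, (n + k) % m := by
  rcases Nat.eq_zero_or_pos m with hm | hm
  · intro n; subst hm; simp [Nat.mod_zero, aux_sum_3k1 n]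
  intro n
  induction n using Nat.strong_induction_on with
  | _ n ih =>
  rcases Nat.lt_or_ge n m with hnm | hnm
  · -- base case: n < m
    rcases le_or_gt (2 * n) m with h2 | h2
    · -- 2n ≤ m : RHS terms are unreduced
      calc (∑ k ∈ range n, (3 * k + 1) % m) ≤ ∑ k ∈ range n, (3 * k + 1) :=
            Finset.sum_le_sum fun k _ => Nat.mod_le _ _
        _ = ∑ k ∈ range n, (n + k) := aux_sum_3k1 n
        _ = ∑ k ∈ range n, (n + k) % m :=
            Finset.sum_congr rfl fun k hk => by
              rw [Finset.mem_range] at hk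
              exact (Nat.mod_eq_of_lt (by omega)).symm
    · -- m < 2n ≤ 2m
      have hL : (∑ k ∈ range n, (3 * k + 1) % m) + m * (∑ k ∈ range n, (3 * k + 1) / m)
          = ∑ k ∈ range n, (3 * k + 1) := by
        rw [Finset.mul_sum, ← Finset.sum_add_distrib]
        exact Finset.sum_congr rfl fun k _ => Nat.mod_add_div _ _
      have hR : (∑ k ∈ range n, (n + k) % m) + m * (∑ k ∈ range n, (n + k) / m)
          = ∑ k ∈ range n, (n + k) := by
        rw [Finset.mul_sum, ← Finset.sum_add_distrib]
        exact Finset.sum_congr rfl fun k _ => Nat.mod_add_div _ _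
      -- RHS quotient sum is exactly 2n - m
      have hRq : (∑ k ∈ range n, (n + k) / m) = 2 * n - m := by
        have : ∀ k ∈ range n, (n + k) / m = if m - n ≤ k then 1 else 0 := by
          intro k hk
          rw [Finset.mem_range] at hk
          rcases le_or_gt (m - n) k with h | h
          · rw [if_pos h]
            exact Nat.div_eq_of_lt_le (by omega) (by omega)
          · rw [if_neg (by omega)]
            exact Nat.div_eq_of_lt (by omega)
        rw [Finset.sum_congr rfl this, aux_ind_sum]
        omega
      -- LHS quotient sum is at least 2n - m
      have ha := Nat.div_add_mod (m + 1) 3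
      have ha' := Nat.mod_lt (m + 1) (by norm_num : 0 < 3)
      have hb := Nat.div_add_mod (2 * m + 1) 3
      have hb' := Nat.mod_lt (2 * m + 1) (by norm_num : 0 < 3)
      set a := (m + 1) / 3 with hadef
      set b := (2 * m + 1) / 3 with hbdef
      have hLq : 2 * n - m ≤ ∑ k ∈ range n, (3 * k + 1) / m := by
        have hterm : ∀ k ∈ range n,
            (if a ≤ k then 1 else 0) + (if b ≤ k then 1 else 0) ≤ (3 * k + 1) / m := by
          intro k hk
          rw [Finset.mem_range] at hk
          rw [aux_div3 hm (by omega)]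
          have e1 : (m ≤ 3 * k + 1) ↔ (a ≤ k) := by omega
          have e2 : (2 * m ≤ 3 * k + 1) ↔ (b ≤ k) := by omega
          simp only [e1, e2]
          exact le_refl _
        calc 2 * n - m ≤ (n - a) + (n - b) := by omega
          _ = (∑ k ∈ range n, (if a ≤ k then 1 else 0))
              + ∑ k ∈ range n, (if b ≤ k then 1 else 0) := by
              rw [aux_ind_sum, aux_ind_sum]
          _ = ∑ k ∈ range n, ((if a ≤ k then 1 else 0) + (if b ≤ k then 1 else 0)) :=
              (Finset.sum_add_distrib).symm
          _ ≤ ∑ k ∈ range n, (3 * k + 1) / m := Finset.sum_le_sum hterm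
      have hS := aux_sum_3k1 n
      have hmul : m * (2 * n - m) ≤ m * (∑ k ∈ range n, (3 * k + 1) / m) :=
        Nat.mul_le_mul_left m hLq
      rw [hRq] at hR
      omega
  · -- inductive step: n = n' + m
    obtain ⟨n', rfl⟩ : ∃ n', n = n' + m := ⟨n - m, by omega⟩
    have ihn : (∑ k ∈ range n', (3 * k + 1) % m) ≤ ∑ k ∈ range n', (n' + k) % m :=
      ih n' (by omega)
    -- split LHS
    have hLsplit : (∑ k ∈ range (n' + m), (3 * k + 1) % m)
        = (∑ k ∈ range n', (3 * k + 1) % m) + ∑ k ∈ Finset.Ico n' (n' + m), (3 * k + 1) % m := by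
      rw [Finset.range_eq_Ico,
        ← Finset.sum_Ico_consecutive _ (Nat.zero_le n') (by omega : n' ≤ n' + m), Finset.range_eq_Ico]
    have hLwin : (∑ k ∈ Finset.Ico n' (n' + m), (3 * k + 1) % m)
        = ∑ k ∈ range m, (3 * k + 1) % m :=
      aux_window (fun k => (3 * k + 1) % m) m (fun k => by
        show (3 * (k + m) + 1) % m = (3 * k + 1) % m
        have h : 3 * (k + m) + 1 = (3 * k + 1) + m * 3 := by ring
        rw [h, Nat.add_mul_mod_self_left]) n'
    -- split RHS
    have hRterm : ∀ k, ((n' + m) + k) % m = (n' + k) % m := fun k => by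
      have : (n' + m) + k = (n' + k) + m := by omega
      rw [this, Nat.add_mod_right]
    have hRsplit : (∑ k ∈ range (n' + m), ((n' + m) + k) % m)
        = (∑ k ∈ range n', (n' + k) % m) + ∑ k ∈ Finset.Ico n' (n' + m), (n' + k) % m := by
      have : (∑ k ∈ range (n' + m), ((n' + m) + k) % m)
          = ∑ k ∈ range (n' + m), (n' + k) % m :=
        Finset.sum_congr rfl fun k _ => hRterm k
      rw [this, Finset.range_eq_Ico,
        ← Finset.sum_Ico_consecutive _ (Nat.zero_le n') (by omega : n' ≤ n' + m), Finset.range_eq_Ico]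
    have hRwin : (∑ k ∈ Finset.Ico n' (n' + m), (n' + k) % m) = ∑ k ∈ range m, k := by
      rw [Finset.sum_Ico_eq_sum_range]
      have h1 : (∑ i ∈ range (n' + m - n'), (n' + (n' + i)) % m)
          = ∑ i ∈ range m, (2 * n' + i) % m := by
        have hm' : n' + m - n' = m := by omega
        rw [hm']
        exact Finset.sum_congr rfl fun i _ => by ring_nf
      rw [h1]
      have h2 : (∑ i ∈ range m, (2 * n' + i) % m)
          = ∑ j ∈ Finset.Ico (2 * n') (2 * n' + m), j % m := by
        rw [Finset.sum_Ico_eq_sum_range]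
        have hm' : 2 * n' + m - 2 * n' = m := by omega
        rw [hm']
      rw [h2, aux_window (fun j => j % m) m (fun j => Nat.add_mod_right j m) (2 * n')]
      exact Finset.sum_congr rfl fun j hj => Nat.mod_eq_of_lt (Finset.mem_range.mp hj)
    rw [hLsplit, hLwin, hRsplit, hRwin, aux_msum_period hm]
    omega

/-- Key inequality, floor form: `∑_{k<n} (n+k)/m ≤ ∑_{k<n} (3k+1)/m`. -/
lemma key_div (m n : ℕ) :
    (∑ k ∈ range n, (n + k) / m) ≤ ∑ k ∈ range n, (3 * k + 1) / m := by
  rcases Nat.eq_zero_or_pos m with hm | hm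
  · subst hm; simp
  have hL : (∑ k ∈ range n, (3 * k + 1) % m) + m * (∑ k ∈ range n, (3 * k + 1) / m)
      = ∑ k ∈ range n, (3 * k + 1) := by
    rw [Finset.mul_sum, ← Finset.sum_add_distrib]
    exact Finset.sum_congr rfl fun k _ => Nat.mod_add_div _ _
  have hR : (∑ k ∈ range n, (n + k) % m) + m * (∑ k ∈ range n, (n + k) / m)
      = ∑ k ∈ range n, (n + k) := by
    rw [Finset.mul_sum, ← Finset.sum_add_distrib]
    exact Finset.sum_congr rfl fun k _ => Nat.mod_add_div _ _
  have hS := aux_sum_3k1 n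
  have hkey := key_mod m n
  have hmul : m * (∑ k ∈ range n, (n + k) / m) ≤ m * (∑ k ∈ range n, (3 * k + 1) / m) := by
    omega
  exact Nat.le_of_mul_le_mul_left hmul hm

/-- The divisibility of products of factorials. -/
lemma key_dvd (n : ℕ) :
    (∏ k ∈ range n, (n + k).factorial) ∣ ∏ k ∈ range n, (3 * k + 1).factorial := by
  have hPn : (∏ k ∈ range n, (n + k).factorial) ≠ 0 :=
    Finset.prod_ne_zero_iff.mpr fun k _ => (Nat.factorial_pos _).ne'
  have hP3 : (∏ k ∈ range n, (3 * k + 1).factorial) ≠ 0 :=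
    Finset.prod_ne_zero_iff.mpr fun k _ => (Nat.factorial_pos _).ne'
  rw [← Nat.factorization_le_iff_dvd hPn hP3]
  rw [Nat.factorization_prod fun k _ => (Nat.factorial_pos _).ne',
      Nat.factorization_prod fun k _ => (Nat.factorial_pos _).ne']
  intro p
  rw [Finset.sum_apply', Finset.sum_apply']
  by_cases hp : p.Prime
  · haveI : Fact p.Prime := ⟨hp⟩
    have hlog : ∀ x : ℕ, x ≤ 3 * n → Nat.log p x < 3 * n + 1 :=
      fun x hx => lt_of_le_of_lt (Nat.log_le_self p x) (by omega)
    have hfact : ∀ x : ℕ, x ≤ 3 * n →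
        (x.factorial).factorization p = ∑ i ∈ Finset.Ico 1 (3 * n + 1), x / p ^ i := by
      intro x hx
      rw [Nat.factorization_def _ hp]
      exact padicValNat_factorial (hlog x hx)
    calc (∑ k ∈ range n, ((n + k).factorial).factorization p)
        = ∑ k ∈ range n, ∑ i ∈ Finset.Ico 1 (3 * n + 1), (n + k) / p ^ i :=
          Finset.sum_congr rfl fun k hk => hfact (n + k)
            (by rw [Finset.mem_range] at hk; omega)
      _ = ∑ i ∈ Finset.Ico 1 (3 * n + 1), ∑ k ∈ range n, (n + k) / p ^ i :=
          Finset.sum_comm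
      _ ≤ ∑ i ∈ Finset.Ico 1 (3 * n + 1), ∑ k ∈ range n, (3 * k + 1) / p ^ i :=
          Finset.sum_le_sum fun i _ => key_div (p ^ i) n
      _ = ∑ k ∈ range n, ∑ i ∈ Finset.Ico 1 (3 * n + 1), (3 * k + 1) / p ^ i :=
          Finset.sum_comm
      _ = ∑ k ∈ range n, ((3 * k + 1).factorial).factorization p :=
          (Finset.sum_congr rfl fun k hk => hfact (3 * k + 1)
            (by rw [Finset.mem_range] at hk; omega)).symm
  · have h0 : ∀ x : ℕ, (x.factorial).factorization p = 0 := fun x =>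
      Nat.factorization_eq_zero_of_not_prime _ hp
    simp [h0]

/-- The Mills–Robbins–Rumsey product counting ASMs of order `n`, as a rational:
`∏_{k=0}^{n-1} (3k+1)!/(n+k)!`. -/
def asmProduct (n : ℕ) : ℚ :=
  ∏ k ∈ Finset.range n, ((3 * k + 1).factorial : ℚ) / ((n + k).factorial : ℚ)

/-- For all `n ≥ 1` the product `∏_{k=0}^{n-1} (3k+1)!/(n+k)!` is a (nonnegative)
integer, and for `n = 1,…,6` it takes the values `1, 2, 7, 42, 429, 7436`. -/
theorem asmProduct_integer_and_values :
    (∀ n, 1 ≤ n → ∃ m : ℕ, asmProduct n = (m : ℚ)) ∧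
    asmProduct 1 = 1 ∧ asmProduct 2 = 2 ∧ asmProduct 3 = 7 ∧
    asmProduct 4 = 42 ∧ asmProduct 5 = 429 ∧ asmProduct 6 = 7436 := by
  constructor
  · intro n hn
    refine ⟨(∏ k ∈ range n, (3 * k + 1).factorial) / (∏ k ∈ range n, (n + k).factorial), ?_⟩
    have hdvd := key_dvd n
    have hPn : ((∏ k ∈ range n, (n + k).factorial : ℕ) : ℚ) ≠ 0 := by
      exact_mod_cast (Nat.pos_of_ne_zero
        (Finset.prod_ne_zero_iff.mpr fun k _ => (Nat.factorial_pos _).ne')).ne'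
    rw [Nat.cast_div hdvd hPn]
    rw [asmProduct, Finset.prod_div_distrib]
    push_cast
    rfl
  · refine ⟨?_, ?_, ?_, ?_, ?_, ?_⟩ <;>
      norm_num [asmProduct, Finset.prod_range_succ, Nat.factorial]
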